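/- For every finite word t = t_0 … t_{k−1} over the alphabet Σ = 2^(AP × {0,…,n−1}), reps(t) equals the number of neutral rotations of t, i.e., reps(t) = |{j ∈ {0,…,n−1} : rot(t,j) = t}|. -/

import Mathlib

/-- Rotation of a letter `x ⊆ AP × {0,…,n−1}` by `k`. -/
def rotL {AP : Type} [DecidableEq AP] (n : ℕ) (x : Finset (AP × ZMod n)) (k : ℤ) :
    Finset (AP × ZMod n) :=
  x.image (fun pj => (pj.1, pj.2 + (k : ZMod n)))

/-- Letter-wise rotation of a finite word over `Σ = 2^(AP × {0,…,n−1})`. -/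
def rotW {AP : Type} [DecidableEq AP] (n : ℕ) (t : List (Finset (AP × ZMod n))) (k : ℤ) :
    List (Finset (AP × ZMod n)) :=
  t.map (fun x => rotL n x k)

/-- `rep(x) = |{j ∈ {0,…,n−1} : rot(x,j) = x}|` for a single letter `x`. -/
def rep {AP : Type} [DecidableEq AP] (n : ℕ) (x : Finset (AP × ZMod n)) : ℕ :=
  ((Finset.range n).filter (fun j : ℕ => rotL n x ((j : ℤ)) = x)).card

/-- `reps(ε) = n` and `reps(w·x) = gcd(reps(w), rep(x))`. -/
def reps {AP : Type} [DecidableEq AP] (n : ℕ) (t : List (Finset (AP × ZMod n))) : ℕ :=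
  t.foldl (fun a x => Nat.gcd a (rep n x)) n

section Aux

variable {AP : Type} [DecidableEq AP]

lemma rotL_zero (n : ℕ) (x : Finset (AP × ZMod n)) : rotL n x 0 = x := by
  simp [rotL]

lemma rotL_add (n : ℕ) (x : Finset (AP × ZMod n)) (a b : ℤ) :
    rotL n x (a + b) = rotL n (rotL n x a) b := by
  simp only [rotL, Finset.image_image]
  apply Finset.image_congr
  intro pj _
  simp [add_assoc]

lemma rotW_zero (n : ℕ) (t : List (Finset (AP × ZMod n))) : rotW n t 0 = t := by
  simp [rotW, rotL_zero]

lemma rotW_add (n : ℕ) (t : List (Finset (AP × ZMod n))) (a b : ℤ) :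
    rotW n t (a + b) = rotW n (rotW n t a) b := by
  simp [rotW, rotL_add]

lemma rotL_natCast (n : ℕ) (x : Finset (AP × ZMod n)) : rotL n x (n : ℤ) = x := by
  have : ((n : ℤ) : ZMod n) = 0 := by push_cast; simp
  simp [rotL, this]

/-- The stabilizer of a word under rotation, as an additive subgroup of `ℤ`. -/
def stabW (n : ℕ) (t : List (Finset (AP × ZMod n))) : AddSubgroup ℤ where
  carrier := {k | rotW n t k = t}
  zero_mem' := rotW_zero n t
  add_mem' := by
    intro a b ha hb
    simp only [Set.mem_setOf_eq] at *
    rw [rotW_add, ha, hb]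
  neg_mem' := by
    intro a ha
    simp only [Set.mem_setOf_eq] at *
    have h : rotW n (rotW n t a) (-a) = t := by
      rw [← rotW_add, add_neg_cancel, rotW_zero]
    rw [ha] at h
    exact h

lemma exists_gen (n : ℕ) (hn : 0 < n) (t : List (Finset (AP × ZMod n))) :
    ∃ b : ℕ, 0 < b ∧ b ∣ n ∧ ∀ k : ℤ, (rotW n t k = t ↔ (b : ℤ) ∣ k) := by
  obtain ⟨a, ha⟩ := Int.subgroup_cyclic (stabW n t)
  rw [← AddSubgroup.zmultiples_eq_closure] at ha
  have hmem : ∀ k : ℤ, (rotW n t k = t ↔ a ∣ k) := by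
    intro k
    have : rotW n t k = t ↔ k ∈ stabW n t := Iff.rfl
    rw [this, ha, Int.mem_zmultiples_iff]
  have hdn : a ∣ (n : ℤ) := by
    rw [← hmem]
    simp [rotW, rotL_natCast]
  have hane : a ≠ 0 := by
    rintro rfl
    simp only [zero_dvd_iff] at hdn
    omega
  refine ⟨a.natAbs, Int.natAbs_pos.mpr hane, ?_, ?_⟩
  · exact Int.natCast_dvd_natCast.mp (by simpa using (Int.natAbs_dvd.mpr hdn))
  · intro k
    rw [hmem k, Int.natAbs_dvd]

lemma count_dvd (n b : ℕ) (hb : 0 < b) (hbn : b ∣ n) :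
    ((Finset.range n).filter (fun j : ℕ => (b : ℤ) ∣ (j : ℤ))).card = n / b := by
  have h1 : ((Finset.range n).filter (fun j : ℕ => (b : ℤ) ∣ (j : ℤ)))
      = (Finset.range (n / b)).image (fun i => b * i) := by
    ext j
    simp only [Finset.mem_filter, Finset.mem_range, Finset.mem_image, Int.natCast_dvd_natCast]
    constructor
    · rintro ⟨hj, i, rfl⟩
      refine ⟨i, ?_, rfl⟩
      rw [Nat.lt_div_iff_mul_lt' hbn]
      omega
    · rintro ⟨i, hi, rfl⟩
      rw [Nat.lt_div_iff_mul_lt' hbn] at hi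
      exact ⟨by omega, ⟨i, rfl⟩⟩
  rw [h1, Finset.card_image_of_injective _ (fun i j h => Nat.eq_of_mul_eq_mul_left hb h), Finset.card_range]

lemma div_lcm_eq_gcd_div {n a b : ℕ} (hn : 0 < n) (ha : a ∣ n) (hb : b ∣ n) :
    n / Nat.lcm a b = Nat.gcd (n / a) (n / b) := by
  have ha0 : 0 < a := Nat.pos_of_dvd_of_pos ha hn
  have hb0 : 0 < b := Nat.pos_of_dvd_of_pos hb hn
  have hL : Nat.lcm a b ∣ n := Nat.lcm_dvd ha hb
  apply Nat.dvd_antisymm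
  · apply Nat.dvd_gcd
    · rw [Nat.dvd_div_iff_mul_dvd ha]
      calc a * (n / Nat.lcm a b) ∣ Nat.lcm a b * (n / Nat.lcm a b) :=
            Nat.mul_dvd_mul_right (Nat.dvd_lcm_left a b) _
        _ = n := Nat.mul_div_cancel' hL
    · rw [Nat.dvd_div_iff_mul_dvd hb]
      calc b * (n / Nat.lcm a b) ∣ Nat.lcm a b * (n / Nat.lcm a b) :=
            Nat.mul_dvd_mul_right (Nat.dvd_lcm_right a b) _
        _ = n := Nat.mul_div_cancel' hL
  · set g := Nat.gcd (n / a) (n / b) with hg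
    have hga : g ∣ n / a := Nat.gcd_dvd_left _ _
    have hgb : g ∣ n / b := Nat.gcd_dvd_right _ _
    have hgn : g ∣ n := hga.trans (Nat.div_dvd_of_dvd ha)
    rw [Nat.dvd_div_iff_mul_dvd hL, mul_comm]
    have hag : a ∣ n / g := by
      rw [Nat.dvd_div_iff_mul_dvd hgn, mul_comm, ← Nat.dvd_div_iff_mul_dvd ha]
      exact hga
    have hbg : b ∣ n / g := by
      rw [Nat.dvd_div_iff_mul_dvd hgn, mul_comm, ← Nat.dvd_div_iff_mul_dvd hb]
      exact hgb
    have : Nat.lcm a b ∣ n / g := Nat.lcm_dvd hag hbg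
    calc g * Nat.lcm a b ∣ g * (n / g) := Nat.mul_dvd_mul_left g this
      _ = n := Nat.mul_div_cancel' hgn

lemma reps_foldl (n : ℕ) (t : List (Finset (AP × ZMod n))) (a : ℕ) :
    t.foldl (fun a x => Nat.gcd a (rep n x)) a
      = Nat.gcd a (t.foldl (fun a x => Nat.gcd a (rep n x)) 0) := by
  induction t generalizing a with
  | nil => simp
  | cons x s ih =>
    simp only [List.foldl_cons]
    rw [ih (Nat.gcd a (rep n x)), ih (Nat.gcd 0 (rep n x)), Nat.gcd_zero_left,
      Nat.gcd_assoc]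

lemma reps_cons (n : ℕ) (x : Finset (AP × ZMod n)) (s : List (Finset (AP × ZMod n))) :
    reps n (x :: s) = Nat.gcd (rep n x) (reps n s) := by
  unfold reps
  simp only [List.foldl_cons]
  rw [reps_foldl, reps_foldl n s n, Nat.gcd_assoc, Nat.gcd_comm (rep n x)
    (Nat.gcd n _), Nat.gcd_assoc]
  congr 1
  rw [Nat.gcd_comm]

end Aux

/-- `reps(t)` equals the number of neutral rotations of `t`. -/
theorem reps_eq_card_neutral_rotations
    {AP : Type} [DecidableEq AP] [Fintype AP] (n : ℕ) (hn : 1 ≤ n)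
    (t : List (Finset (AP × ZMod n))) :
    reps n t = ((Finset.range n).filter (fun j : ℕ => rotW n t ((j : ℤ)) = t)).card := by
  have hn0 : 0 < n := hn
  induction t with
  | nil =>
    simp [reps, rotW]
  | cons x s ih =>
    obtain ⟨a, ha0, han, hax⟩ := exists_gen n hn0 [x]
    obtain ⟨b, hb0, hbn, hbs⟩ := exists_gen n hn0 s
    have hrep : rep n x = n / a := by
      unfold rep
      rw [← count_dvd n a ha0 han]
      congr 1
      apply Finset.filter_congr
      intro j _
      have := hax (j : ℤ)
      simp only [rotW, List.map_cons, List.map_nil, List.cons.injEq, and_true] at this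
      simp [this]
    have hs : reps n s = n / b := by
      rw [ih, ← count_dvd n b hb0 hbn]
      congr 1
      apply Finset.filter_congr
      intro j _
      simp [hbs (j : ℤ)]
    have hcard : ((Finset.range n).filter
        (fun j : ℕ => rotW n (x :: s) ((j : ℤ)) = x :: s)).card = n / Nat.lcm a b := by
      rw [← count_dvd n (Nat.lcm a b) (Nat.lcm_pos ha0 hb0) (Nat.lcm_dvd han hbn)]
      congr 1
      apply Finset.filter_congr
      intro j _
      have h1 := hax (j : ℤ)
      have h2 := hbs (j : ℤ)
      simp only [rotW, List.map_cons, List.cons.injEq, List.map_nil, and_true] at h1 h2 ⊢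
      constructor
      · rintro ⟨e1, e2⟩
        have d1 : a ∣ j := by exact_mod_cast h1.mp e1
        have d2 : b ∣ j := by exact_mod_cast h2.mp e2
        exact_mod_cast Nat.lcm_dvd d1 d2
      · intro hd
        have hd' : Nat.lcm a b ∣ j := by exact_mod_cast hd
        have d1 : (a : ℤ) ∣ (j : ℤ) := by
          exact_mod_cast (Nat.dvd_lcm_left a b).trans hd'
        have d2 : (b : ℤ) ∣ (j : ℤ) := by
          exact_mod_cast (Nat.dvd_lcm_right a b).trans hd'
        exact ⟨h1.mpr d1, h2.mpr d2⟩
    rw [hcard, reps_cons, hrep, hs, div_lcm_eq_gcd_div hn0 han hbn]
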